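/- The time-ordered exponential solves the linear ODE: if g(b) = 1 + Σ_{n≥1} ∫_{a≤s₁≤⋯≤sₙ≤b} α(s₁)⋯α(sₙ) ds₁⋯dsₙ for a continuous function α with values in a Banach algebra, then g is the unique solution of g'(t) = g(t)·α(t) with g(a) = 1. -/

import Mathlib

open intervalIntegral

variable {A : Type*} [NormedRing A] [NormedAlgebra ℝ A] [CompleteSpace A]

/-- The `n`-th iterated integral `∫_{a ≤ s₁ ≤ ⋯ ≤ sₙ ≤ t} α(s₁)⋯α(sₙ) ds₁⋯dsₙ`,
written as a nested (recursive) interval integral over the ordered simplex. -/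
noncomputable def orderedIterIntegral (α : ℝ → A) (a : ℝ) : ℕ → ℝ → A
  | 0 => fun _ => 1
  | n + 1 => fun t => ∫ s in a..t, orderedIterIntegral α a n s * α s

/-- The time-ordered exponential
`g(t) = 1 + Σ_{n ≥ 1} ∫_{a ≤ s₁ ≤ ⋯ ≤ sₙ ≤ t} α(s₁)⋯α(sₙ) ds₁⋯dsₙ`. -/
noncomputable def timeOrderedExp (α : ℝ → A) (a : ℝ) (t : ℝ) : A :=
  ∑' n : ℕ, orderedIterIntegral α a n t

section Aux

open MeasureTheory Set

set_option linter.unusedSectionVars false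

lemma orderedIterIntegral_cont (β : ℝ → A) (a : ℝ) (hβ : Continuous β) (n : ℕ) :
    Continuous (orderedIterIntegral β a n) := by
  induction n with
  | zero => exact continuous_const
  | succ n ih =>
    show Continuous fun t => ∫ s in a..t, orderedIterIntegral β a n s * β s
    exact intervalIntegral.continuous_primitive
      (fun c d => ((ih.mul hβ).intervalIntegrable c d)) a

lemma orderedIterIntegral_norm_le (β : ℝ → A) (a M N : ℝ)
    (hM : ∀ s, ‖β s‖ ≤ M) (hN : ‖(1 : A)‖ ≤ N) (hN0 : 0 ≤ N) (n : ℕ) :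
    ∀ t, a ≤ t → ‖orderedIterIntegral β a n t‖ ≤ N * ((M * (t - a)) ^ n / n.factorial) := by
  have hM0 : 0 ≤ M := le_trans (norm_nonneg _) (hM a)
  induction n with
  | zero => intro t ht; simpa [orderedIterIntegral] using hN
  | succ n ih =>
    intro t ht
    have hta : 0 ≤ t - a := sub_nonneg.2 ht
    have hcont : Continuous fun s : ℝ => N * ((M * (s - a)) ^ n / n.factorial) * M := by
      fun_prop
    have h1 : ‖orderedIterIntegral β a (n+1) t‖
        ≤ |∫ s in a..t, N * ((M * (s - a)) ^ n / n.factorial) * M| := by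
      show ‖∫ s in a..t, orderedIterIntegral β a n s * β s‖ ≤ _
      apply intervalIntegral.norm_integral_le_abs_of_norm_le _ (hcont.intervalIntegrable _ _)
      rw [Set.uIoc_of_le ht]
      filter_upwards [ae_restrict_mem measurableSet_Ioc] with s hs
      exact le_trans (norm_mul_le _ _)
        (mul_le_mul (ih s hs.1.le) (hM s) (norm_nonneg _)
          (le_trans (norm_nonneg _) (ih s hs.1.le)))
    have hpow : (∫ s in a..t, (s - a) ^ n) = (t - a) ^ (n + 1) / (n + 1) := by
      rw [show (fun s : ℝ => (s - a) ^ n) = (fun s => ((fun x : ℝ => x ^ n) (s - a))) from rfl]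
      rw [intervalIntegral.integral_comp_sub_right (fun x : ℝ => x ^ n) a]
      simp [integral_pow]
    have h2 : (∫ s in a..t, N * ((M * (s - a)) ^ n / n.factorial) * M)
        = N * M ^ n / n.factorial * M * ((t - a) ^ (n + 1) / (n + 1)) := by
      have : (fun s : ℝ => N * ((M * (s - a)) ^ n / n.factorial) * M)
          = fun s => (N * M ^ n / n.factorial * M) * (s - a) ^ n := by
        funext s; simp only [mul_pow]; ring
      rw [this, intervalIntegral.integral_const_mul, hpow]
    rw [h2] at h1
    refine h1.trans (le_of_eq ?_)
    have hfac : (n.factorial : ℝ) ≠ 0 := Nat.cast_ne_zero.2 n.factorial_ne_zero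
    have hnn : ((n : ℝ) + 1) ≠ 0 := by positivity
    rw [abs_of_nonneg (by positivity)]
    rw [Nat.factorial_succ]
    push_cast
    simp only [mul_pow]
    field_simp
    ring

variable {β : ℝ → A} {a M N : ℝ} (hβ : Continuous β)
  (hM : ∀ s, ‖β s‖ ≤ M) (hN : ‖(1 : A)‖ ≤ N) (hN0 : 0 ≤ N)

include hM hN hN0 in
lemma summable_orderedIterIntegral {t : ℝ} (ht : a ≤ t) :
    Summable fun n => orderedIterIntegral β a n t :=
  Summable.of_norm_bounded ((Real.summable_pow_div_factorial (M * (t - a))).mul_left N)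
    (fun n => orderedIterIntegral_norm_le β a M N hM hN hN0 n t ht)

include hβ hM hN hN0 in
lemma timeOrderedExp_integral_eq {t : ℝ} (ht : a ≤ t) :
    timeOrderedExp β a t = 1 + ∫ s in a..t, timeOrderedExp β a s * β s := by
  have hM0 : 0 ≤ M := le_trans (norm_nonneg _) (hM a)
  have hsum : ∀ u, a ≤ u → Summable fun n => orderedIterIntegral β a n u :=
    fun u hu => summable_orderedIterIntegral hM hN hN0 hu
  rw [timeOrderedExp, Summable.tsum_eq_zero_add (hsum t ht)]
  congr 1
  have hint : ∀ n : ℕ, Integrable (fun s => orderedIterIntegral β a n s * β s)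
      (volume.restrict (Ioc a t)) :=
    fun n => ((orderedIterIntegral_cont β a hβ n).mul hβ).integrableOn_Ioc
  calc (∑' n, orderedIterIntegral β a (n + 1) t)
      = ∑' n, ∫ s in Ioc a t, orderedIterIntegral β a n s * β s := by
        refine tsum_congr fun n => ?_
        show (∫ s in a..t, orderedIterIntegral β a n s * β s) = _
        rw [intervalIntegral.integral_of_le ht]
    _ = ∫ s in Ioc a t, ∑' n, orderedIterIntegral β a n s * β s := by
        apply integral_tsum_of_summable_integral_norm hint
        have hb : ∀ n : ℕ, (∫ s in Ioc a t, ‖orderedIterIntegral β a n s * β s‖)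
            ≤ (N * ((M * (t - a)) ^ n / n.factorial) * M) * (t - a) := by
          intro n
          have hle : ∀ s ∈ Ioc a t, ‖orderedIterIntegral β a n s * β s‖
              ≤ N * ((M * (t - a)) ^ n / n.factorial) * M := by
            intro s hs
            refine le_trans (norm_mul_le _ _) (mul_le_mul ?_ (hM s) (norm_nonneg _)
              (by have := sub_nonneg.2 ht; positivity))
            refine (orderedIterIntegral_norm_le β a M N hM hN hN0 n s hs.1.le).trans ?_
            have : (M * (s - a)) ^ n ≤ (M * (t - a)) ^ n := by
              apply pow_le_pow_left₀ (by nlinarith [hs.1.le]) (by nlinarith [hs.2]) n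
            gcongr
          calc (∫ s in Ioc a t, ‖orderedIterIntegral β a n s * β s‖)
              ≤ ∫ _ in Ioc a t, N * ((M * (t - a)) ^ n / n.factorial) * M :=
                setIntegral_mono_on (hint n).norm (integrableOn_const measure_Ioc_lt_top.ne)
                  measurableSet_Ioc hle
            _ = (N * ((M * (t - a)) ^ n / n.factorial) * M) * (t - a) := by
                rw [setIntegral_const, measureReal_def, Real.volume_Ioc, smul_eq_mul,
                  ENNReal.toReal_ofReal (by linarith [sub_nonneg.2 ht]), mul_comm]
        apply Summable.of_nonneg_of_le (fun n => integral_nonneg fun s => norm_nonneg _) hb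
        exact (((Real.summable_pow_div_factorial (M * (t - a))).mul_left N).mul_right M).mul_right
          (t - a)
    _ = ∫ s in Ioc a t, (∑' n, orderedIterIntegral β a n s) * β s := by
        refine setIntegral_congr_fun measurableSet_Ioc fun s hs => ?_
        exact (hsum s hs.1.le).tsum_mul_right (β s)
    _ = ∫ s in a..t, timeOrderedExp β a s * β s := by
        rw [intervalIntegral.integral_of_le ht]; rfl

include hβ hM hN hN0 in
lemma timeOrderedExp_continuousOn : ContinuousOn (timeOrderedExp β a) (Ici a) := by
  intro t ht
  have hM0 : 0 ≤ M := le_trans (norm_nonneg _) (hM a)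
  have hc : ContinuousOn (timeOrderedExp β a) (Icc a (t + 1)) := by
    apply continuousOn_tsum (fun n => (orderedIterIntegral_cont β a hβ n).continuousOn)
      ((Real.summable_pow_div_factorial (M * (t + 1 - a))).mul_left N)
    intro n x hx
    refine (orderedIterIntegral_norm_le β a M N hM hN hN0 n x hx.1).trans ?_
    have : (M * (x - a)) ^ n ≤ (M * (t + 1 - a)) ^ n := by
      apply pow_le_pow_left₀ (by nlinarith [hx.1]) (by nlinarith [hx.2]) n
    gcongr
  exact (hc t ⟨ht, by linarith⟩).mono_of_mem_nhdsWithin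
    (mem_nhdsWithin.mpr ⟨Iio (t + 1), isOpen_Iio, by simp, fun x hx => ⟨hx.2, hx.1.le⟩⟩)

lemma primitive_hasDerivWithinAt {h : ℝ → A} {a b : ℝ}
    (hcont : ContinuousOn h (Ici a)) {t : ℝ} (ht : t ∈ Icc a b) :
    HasDerivWithinAt (fun u => (1 : A) + ∫ s in a..u, h s) (h t) (Icc a b) t := by
  have hInt : IntervalIntegrable h volume a t := by
    apply ContinuousOn.intervalIntegrable
    rw [uIcc_of_le ht.1]
    exact hcont.mono Icc_subset_Ici_self
  haveI : Fact (t ∈ Icc a b) := ⟨ht⟩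
  have hmeas : StronglyMeasurableAtFilter h (nhdsWithin t (Icc a b)) :=
    ⟨Ici a, Filter.mem_of_superset self_mem_nhdsWithin Icc_subset_Ici_self,
      hcont.aestronglyMeasurable measurableSet_Ici⟩
  have : HasDerivWithinAt (fun u => ∫ s in a..u, h s) (h t) (Icc a b) t :=
    intervalIntegral.integral_hasDerivWithinAt_right (s := Icc a b) (t := Icc a b)
      hInt hmeas ((hcont t ht.1).mono Icc_subset_Ici_self)
  simpa using this.const_add (1 : A)

end Aux

/-- The time-ordered exponential solves the linear ODE: for a continuous `α` with values
in a Banach algebra, `g = timeOrderedExp α a` satisfies `g(a) = 1` and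
`g'(t) = g(t)·α(t)` on `[a,b]`, and it is the unique such solution with `g(a) = 1`. -/
theorem timeOrderedExp_solves_ODE (α : ℝ → A) (a b : ℝ) (hab : a ≤ b)
    (hα : Continuous α) :
    timeOrderedExp α a a = 1 ∧
    (∀ t ∈ Set.Icc a b,
      HasDerivWithinAt (timeOrderedExp α a) (timeOrderedExp α a t * α t) (Set.Icc a b) t) ∧
    (∀ g : ℝ → A, g a = 1 →
      (∀ t ∈ Set.Icc a b, HasDerivWithinAt g (g t * α t) (Set.Icc a b) t) →
      ∀ t ∈ Set.Icc a b, g t = timeOrderedExp α a t) := by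
  classical
  set β : ℝ → A := fun t => α (Set.projIcc a b hab t) with hβdef
  have hβ : Continuous β := hα.comp (continuous_subtype_val.comp continuous_projIcc)
  have hβα : ∀ t ∈ Set.Icc a b, β t = α t := fun t ht => by
    simp [hβdef, Set.projIcc_of_mem hab ht]
  obtain ⟨M, hM⟩ : ∃ M, ∀ s, ‖β s‖ ≤ M := by
    obtain ⟨M, hM⟩ := (isCompact_Icc.image_of_continuousOn
      ((continuous_norm.comp hα).continuousOn (s := Set.Icc a b))).bddAbove
    exact ⟨M, fun s => hM ⟨(Set.projIcc a b hab s : ℝ), (Set.projIcc a b hab s).2, rfl⟩⟩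
  set N : ℝ := max ‖(1 : A)‖ 1 with hNdef
  have hN : ‖(1 : A)‖ ≤ N := le_max_left _ _
  have hN0 : (0 : ℝ) ≤ N := le_trans zero_le_one (le_max_right _ _)
  -- the two time-ordered exponentials agree on `Icc a b`
  have hiter : ∀ n, ∀ t ∈ Set.Icc a b,
      orderedIterIntegral α a n t = orderedIterIntegral β a n t := by
    intro n
    induction n with
    | zero => intro t _; rfl
    | succ n ih =>
      intro t ht
      show (∫ s in a..t, orderedIterIntegral α a n s * α s)
          = ∫ s in a..t, orderedIterIntegral β a n s * β s
      apply intervalIntegral.integral_congr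
      intro s hs
      rw [Set.uIcc_of_le ht.1] at hs
      have hs' : s ∈ Set.Icc a b := ⟨hs.1, hs.2.trans ht.2⟩
      simp only []
      rw [ih s hs', hβα s hs']
  have hEq : ∀ t ∈ Set.Icc a b, timeOrderedExp α a t = timeOrderedExp β a t :=
    fun t ht => tsum_congr fun n => hiter n t ht
  have key : ∀ t, a ≤ t →
      timeOrderedExp β a t = 1 + ∫ s in a..t, timeOrderedExp β a s * β s :=
    fun t ht => timeOrderedExp_integral_eq hβ hM hN hN0 ht
  have hβ1 : timeOrderedExp β a a = 1 := by rw [key a le_rfl]; simp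
  have h1 : timeOrderedExp α a a = 1 := (hEq a (Set.left_mem_Icc.2 hab)).trans hβ1
  have hcontOn : ContinuousOn (fun s => timeOrderedExp β a s * β s) (Set.Ici a) :=
    (timeOrderedExp_continuousOn hβ hM hN hN0).mul hβ.continuousOn
  have hderivβ : ∀ t ∈ Set.Icc a b, HasDerivWithinAt (timeOrderedExp β a)
      (timeOrderedExp β a t * β t) (Set.Icc a b) t := by
    intro t ht
    exact (primitive_hasDerivWithinAt hcontOn ht).congr
      (fun x hx => key x hx.1) (key t ht.1)
  have hderiv : ∀ t ∈ Set.Icc a b, HasDerivWithinAt (timeOrderedExp α a)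
      (timeOrderedExp α a t * α t) (Set.Icc a b) t := by
    intro t ht
    have h' := (hderivβ t ht).congr (fun x hx => hEq x hx) (hEq t ht)
    rwa [hEq t ht, ← hβα t ht]
  refine ⟨h1, hderiv, ?_⟩
  intro g hg0 hg' t ht
  set K : NNReal := ⟨max M 0, le_max_right _ _⟩ with hKdef
  have hv : ∀ u : ℝ, LipschitzOnWith K (fun x : A => x * β u) Set.univ := by
    intro u
    apply LipschitzWith.lipschitzOnWith
    apply LipschitzWith.of_dist_le_mul
    intro x y
    rw [dist_eq_norm, dist_eq_norm, ← sub_mul]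
    calc ‖(x - y) * β u‖ ≤ ‖x - y‖ * ‖β u‖ := norm_mul_le _ _
      _ ≤ ‖x - y‖ * max M 0 := by
          apply mul_le_mul_of_nonneg_left ((hM u).trans (le_max_left _ _)) (norm_nonneg _)
      _ = (K : ℝ) * ‖x - y‖ := by rw [mul_comm]; rfl
  have hmem : ∀ u, u ∈ Set.Ico a b → Set.Icc a b ∈ nhdsWithin u (Set.Ici u) := by
    intro u hu
    exact mem_nhdsWithin.mpr ⟨Set.Iio b, isOpen_Iio, hu.2,
      fun x hx => ⟨hu.1.trans hx.2, hx.1.le⟩⟩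
  have huniq := ODE_solution_unique_of_mem_Icc_right (v := fun u (x : A) => x * β u)
    (s := fun _ => Set.univ) (K := K) (fun u _ => hv u)
    (fun u hu => (hg' u hu).continuousWithinAt)
    (fun u hu => by
      have h' := (hg' u ⟨hu.1, hu.2.le⟩).mono_of_mem_nhdsWithin (hmem u hu)
      rwa [← hβα u ⟨hu.1, hu.2.le⟩] at h')
    (fun _ _ => trivial)
    (fun u hu => (hderiv u hu).continuousWithinAt)
    (fun u hu => by
      have h' := (hderiv u ⟨hu.1, hu.2.le⟩).mono_of_mem_nhdsWithin (hmem u hu)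
      rwa [← hβα u ⟨hu.1, hu.2.le⟩] at h')
    (fun _ _ => trivial)
    (by rw [hg0, h1])
  exact huniq ht
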